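/- Let Θ be induced by a stochastic matrix P on a finite set X with invariant measure μ, and let F = {f_k} be a partition of unity with f_k = Σ_i f_{ik} χ_{C_i} for a partition C = {C_i} and stochastic matrix [f_{ik}]. Then the AFL density matrix ρ^{(2)} with entries ρ_{(k₀,k₁),(l₀,l₁)} = μ(√(f_{k₀}f_{l₀}) · Θ(√(f_{k₁}f_{l₁}))) is a convex combination Σ_{i₀,i₁} μ(χ_{C_{i₀}} Θ(χ_{C_{i₁}})) |v^{(i₀,i₁)}⟩⟨v^{(i₀,i₁)}| of pure states with unit vectors v^{(i₀,i₁)}_{(k₀,k₁)} = √(f_{i₀k₀} f_{i₁k₁}), and consequently S_q(ρ^{(2)}) ≤ S(μ∘(χ_C ∨ Θ(χ_C))), the Shannon entropy of the refined sharp partition. -/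

import Mathlib

noncomputable def eta (x : ℝ) : ℝ := -(x * Real.log x)

lemma eta_eq : eta = Real.negMulLog := by
  funext x; simp [eta, Real.negMulLog]


@[simp] lemma eta_zero : eta 0 = 0 := by simp [eta]

/-- Jensen for `eta` with subprobability weights. -/
lemma sum_mul_eta_le {κ : Type} [Fintype κ] (p x : κ → ℝ) (hp0 : ∀ j, 0 ≤ p j)
    (hp1 : ∑ j, p j ≤ 1) (hx : ∀ j, 0 ≤ x j) :
    ∑ j, p j * eta (x j) ≤ eta (∑ j, p j * x j) := by
  classical
  set W : Option κ → ℝ := fun o => o.elim (1 - ∑ j, p j) p with hW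
  set q : Option κ → ℝ := fun o => o.elim 0 x with hq
  have h := Real.concaveOn_negMulLog.le_map_sum (t := (Finset.univ : Finset (Option κ)))
    (w := W) (p := q) ?_ ?_ ?_
  · rw [eta_eq]
    have h1 : ∑ o : Option κ, W o • Real.negMulLog (q o)
        = ∑ j, p j * Real.negMulLog (x j) := by
      rw [Fintype.sum_option]; simp [hW, hq]
    have h2 : ∑ o : Option κ, W o • q o = ∑ j, p j * x j := by
      rw [Fintype.sum_option]; simp [hW, hq]
    rw [h1, h2] at h
    exact h
  · rintro (_ | j) _
    · simpa [hW] using hp1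
    · exact hp0 j
  · rw [Fintype.sum_option]; simp [hW]
  · rintro (_ | j) _
    · simp [hq]
    · exact hx j

/-- Abstract lemma: entropy of eigenvalues is at most entropy of mixture weights. -/
lemma mixture_entropy {ι κ : Type} [Fintype ι] [Fintype κ] [DecidableEq κ] (a : ι → κ → ℝ)
    (w : ι → ℝ) (lam : κ → ℝ)
    (hO : ∀ j j', ∑ i, a i j * a i j' = if j = j' then lam j else 0)
    (hW : ∀ i, ∑ j, (a i j)^2 = w i) :
    ∑ j, eta (lam j) ≤ ∑ i, eta (w i) := by
  classical
  have hl0 : ∀ j, 0 ≤ lam j := by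
    intro j
    have := hO j j
    simp only [if_true, eq_self_iff_true] at this
    rw [← this]
    exact Finset.sum_nonneg fun i _ => mul_self_nonneg _
  have hsq : ∀ j, ∑ i, (a i j)^2 = lam j := by
    intro j
    have := hO j j; simp only [if_true, eq_self_iff_true] at this
    rw [← this]; exact Finset.sum_congr rfl fun i _ => sq (a i j)
  have hzero : ∀ j, lam j = 0 → ∀ i, a i j = 0 := by
    intro j hj i
    have h := hO j j
    simp only [if_true, eq_self_iff_true, hj] at h
    have h2 := (Finset.sum_eq_zero_iff_of_nonneg
      (fun i _ => mul_self_nonneg (a i j))).mp h i (Finset.mem_univ i)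
    exact mul_self_eq_zero.mp h2
  set D : ι → κ → ℝ := fun i j => if lam j = 0 then 0 else (a i j)^2 / lam j with hD
  have hD0 : ∀ i j, 0 ≤ D i j := by
    intro i j
    by_cases h : lam j = 0
    · simp [hD, h]
    · simp only [hD, if_neg h]
      exact div_nonneg (sq_nonneg _) (hl0 j)
  have hDl : ∀ i, ∑ j, D i j * lam j = w i := by
    intro i
    rw [← hW i]
    refine Finset.sum_congr rfl fun j _ => ?_
    by_cases h : lam j = 0
    · simp [hD, h, hzero j h i]
    · simp only [hD, if_neg h]
      field_simp
  have hcol : ∀ j, lam j ≠ 0 → ∑ i, D i j = 1 := by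
    intro j hj
    simp only [hD, if_neg hj]
    rw [← Finset.sum_div, hsq j, div_self hj]
  have hrow : ∀ i, ∑ j, D i j ≤ 1 := by
    intro i
    set z : κ → ℝ := fun j => if lam j = 0 then 0 else a i j / lam j with hz
    set t : ℝ := ∑ j, D i j with ht
    have ht0 : 0 ≤ t := Finset.sum_nonneg fun j _ => hD0 i j
    have e1 : ∑ j, lam j * (z j)^2 = t := by
      refine Finset.sum_congr rfl fun j _ => ?_
      by_cases h : lam j = 0
      · simp [hz, hD, h]
      · simp only [hz, hD, if_neg h]
        field_simp
    have e2 : ∑ j, z j * a i j = t := by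
      refine Finset.sum_congr rfl fun j _ => ?_
      by_cases h : lam j = 0
      · simp [hz, hD, h, hzero j h i]
      · simp only [hz, hD, if_neg h]
        field_simp
    have e3 : ∑ i' : ι, (∑ j, z j * a i' j)^2 = ∑ j, lam j * (z j)^2 := by
      calc ∑ i' : ι, (∑ j, z j * a i' j)^2
          = ∑ i' : ι, ∑ j, ∑ j', (z j * z j') * (a i' j * a i' j') := by
            refine Finset.sum_congr rfl fun i' _ => ?_
            rw [sq, Finset.sum_mul_sum]
            exact Finset.sum_congr rfl fun j _ => Finset.sum_congr rfl fun j' _ => by ring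
        _ = ∑ j, ∑ j', (z j * z j') * ∑ i' : ι, a i' j * a i' j' := by
            rw [Finset.sum_comm]
            refine Finset.sum_congr rfl fun j _ => ?_
            rw [Finset.sum_comm]
            refine Finset.sum_congr rfl fun j' _ => ?_
            rw [Finset.mul_sum]
        _ = ∑ j, lam j * (z j)^2 := by
            refine Finset.sum_congr rfl fun j _ => ?_
            simp_rw [hO]
            simp only [mul_ite, mul_zero]
            rw [Finset.sum_ite_eq]
            simp only [Finset.mem_univ, if_true]
            ring
    have hle : t^2 ≤ t := by
      have h1 : (∑ j, z j * a i j)^2 ≤ ∑ i' : ι, (∑ j, z j * a i' j)^2 :=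
        Finset.single_le_sum (f := fun i' => (∑ j, z j * a i' j)^2)
          (fun i' _ => sq_nonneg _) (Finset.mem_univ i)
      rw [e2] at h1
      rw [e3, e1] at h1
      exact h1
    nlinarith
  -- final chain
  have step1 : ∑ j, eta (lam j) = ∑ j, (∑ i, D i j) * eta (lam j) := by
    refine Finset.sum_congr rfl fun j _ => ?_
    by_cases h : lam j = 0
    · simp [h]
    · rw [hcol j h, one_mul]
  rw [step1]
  have step2 : ∑ j, (∑ i, D i j) * eta (lam j) = ∑ i, ∑ j, D i j * eta (lam j) := by
    rw [Finset.sum_comm]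
    exact Finset.sum_congr rfl fun j _ => by rw [Finset.sum_mul]
  rw [step2]
  refine Finset.sum_le_sum fun i _ => ?_
  calc ∑ j, D i j * eta (lam j) ≤ eta (∑ j, D i j * lam j) :=
        sum_mul_eta_le _ _ (hD0 i) (hrow i) hl0
    _ = eta (w i) := by rw [hDl i]

noncomputable def shannon {I : Type} [Fintype I] (p : I → ℝ) : ℝ := ∑ i, eta (p i)

noncomputable def vonNeumannR {K : Type} [Fintype K] [DecidableEq K]
    {ρ : Matrix K K ℝ} (h : ρ.IsHermitian) : ℝ := ∑ k, eta (h.eigenvalues k)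


lemma main_aux {ι K : Type} [Fintype ι] [Fintype K] [DecidableEq K]
    (w : ι → ℝ) (hw0 : ∀ i, 0 ≤ w i) (v : ι → K → ℝ)
    (hv : ∀ i, ∑ k, (v i k)^2 = 1)
    (ρ : Matrix K K ℝ) (hρ : ∀ k l, ρ k l = ∑ i, w i * (v i k * v i l))
    (hherm : ρ.IsHermitian) :
    ∑ j, eta (hherm.eigenvalues j) ≤ ∑ i, eta (w i) := by
  classical
  set V : Matrix K K ℝ := (hherm.eigenvectorUnitary : Matrix K K ℝ) with hV
  have hVmem : V ∈ Matrix.unitaryGroup K ℝ := hherm.eigenvectorUnitary.2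
  have hVV : V * star V = 1 := Matrix.mem_unitaryGroup_iff.mp hVmem
  have hsVV : star V * V = 1 := Matrix.mem_unitaryGroup_iff'.mp hVmem
  have orth1 : ∀ p q : K, ∑ j, V p j * V q j = if p = q then 1 else 0 := by
    intro p q
    have h := congrFun (congrFun (congrArg (fun M => (M : Matrix K K ℝ)) hVV) p) q
    simp only [Matrix.mul_apply, Matrix.star_apply, star_trivial, Matrix.one_apply] at h
    exact h
  have hdiag : star (hherm.eigenvectorUnitary : Matrix K K ℝ) * ρ *
      (hherm.eigenvectorUnitary : Matrix K K ℝ) =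
      Matrix.diagonal (RCLike.ofReal ∘ hherm.eigenvalues) := by
    simpa using hherm.conjStarAlgAut_star_eigenvectorUnitary
  have hrho : ∀ j j', ∑ p, ∑ q, (V p j * ρ p q) * V q j'
      = if j = j' then hherm.eigenvalues j else 0 := by
    intro j j'
    have h := congrFun (congrFun (congrArg (fun M => (M : Matrix K K ℝ)) hdiag) j) j'
    simp only [Matrix.mul_apply, Matrix.star_apply, star_trivial, Matrix.diagonal_apply,
      Function.comp_apply, RCLike.ofReal_real_eq_id, id_eq, ← hV] at h
    rw [← h]
    rw [Finset.sum_comm]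
    refine Finset.sum_congr rfl fun q _ => ?_
    rw [Finset.sum_mul]
  set a : ι → K → ℝ := fun i j => Real.sqrt (w i) * ∑ p, V p j * v i p with ha
  have hW : ∀ i, ∑ j, (a i j)^2 = w i := by
    intro i
    have expand : ∀ j, (a i j)^2 = w i * ∑ p, ∑ q, (v i p * v i q) * (V p j * V q j) := by
      intro j
      simp only [ha]
      rw [mul_pow, Real.sq_sqrt (hw0 i), sq, Finset.sum_mul_sum]
      congr 1
      exact Finset.sum_congr rfl fun p _ => Finset.sum_congr rfl fun q _ => by ring
    simp_rw [expand]
    rw [← Finset.mul_sum]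
    have : ∑ j, ∑ p, ∑ q, (v i p * v i q) * (V p j * V q j)
        = ∑ p, ∑ q, (v i p * v i q) * ∑ j, V p j * V q j := by
      rw [Finset.sum_comm]
      refine Finset.sum_congr rfl fun p _ => ?_
      rw [Finset.sum_comm]
      refine Finset.sum_congr rfl fun q _ => ?_
      rw [Finset.mul_sum]
    rw [this]
    simp_rw [orth1]
    simp only [mul_ite, mul_one, mul_zero]
    rw [Finset.sum_congr rfl fun p _ => Finset.sum_ite_eq (Finset.univ) p (fun q => v i p * v i q)]
    simp only [Finset.mem_univ, if_true]
    have : ∑ p, v i p * v i p = 1 := by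
      rw [← hv i]; exact Finset.sum_congr rfl fun p _ => (sq (v i p)).symm
    rw [this, mul_one]
  have hO : ∀ j j', ∑ i, a i j * a i j'
      = if j = j' then hherm.eigenvalues j else 0 := by
    intro j j'
    rw [← hrho j j']
    have expand : ∀ i, a i j * a i j'
        = ∑ p, ∑ q, (w i * (v i p * v i q)) * (V p j * V q j') := by
      intro i
      simp only [ha]
      rw [mul_mul_mul_comm, Real.mul_self_sqrt (hw0 i), Finset.sum_mul_sum, Finset.mul_sum]
      refine Finset.sum_congr rfl fun p _ => ?_
      rw [Finset.mul_sum]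
      exact Finset.sum_congr rfl fun q _ => by ring
    simp_rw [expand]
    have swap : ∑ i, ∑ p, ∑ q, (w i * (v i p * v i q)) * (V p j * V q j')
        = ∑ p, ∑ q, (∑ i, w i * (v i p * v i q)) * (V p j * V q j') := by
      rw [Finset.sum_comm]
      refine Finset.sum_congr rfl fun p _ => ?_
      rw [Finset.sum_comm]
      refine Finset.sum_congr rfl fun q _ => ?_
      rw [Finset.sum_mul]
    rw [swap]
    refine Finset.sum_congr rfl fun p _ => Finset.sum_congr rfl fun q _ => ?_
    rw [← hρ p q]
    ring
  exact mixture_entropy a w hherm.eigenvalues hO hW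

/-- for `Θ` induced by a stochastic matrix P with invariant
measure μ, and F a partition of unity which is simple over a partition C
(cell map `c : X → I`, `f_k(x) = M_{c(x),k}` with M stochastic), the AFL
density matrix at time 2,
`ρ_{(k₀,k₁),(l₀,l₁)} = μ(√(f_{k₀}f_{l₀}) · Θ(√(f_{k₁}f_{l₁})))`,
is the convex combination `Σ_{i₀,i₁} μ(χ_{C_{i₀}}Θ(χ_{C_{i₁}})) |v⟩⟨v|` of the
pure states given by the unit vectors `v_{(k₀,k₁)} = √(M_{i₀k₀} M_{i₁k₁})`,
and consequently `S_q(ρ) ≤ S(μ∘(χ_C ∨ Θ(χ_C)))`. -/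
theorem stmt18 {X I K : Type} [Fintype X] [Fintype I] [DecidableEq I] [Fintype K]
    [DecidableEq K]
    (μ : X → ℝ) (hμ0 : ∀ x, 0 ≤ μ x) (hμ1 : ∑ x, μ x = 1)
    (P : X → X → ℝ) (hP0 : ∀ x y, 0 ≤ P x y) (hP1 : ∀ x, ∑ y, P x y = 1)
    (hinv : ∀ y, ∑ x, μ x * P x y = μ y)
    (Θ : (X → ℝ) → (X → ℝ)) (hΘ : ∀ f x, Θ f x = ∑ y, P x y * f y)
    (c : X → I) (hc : Function.Surjective c)
    (M : I → K → ℝ) (hM0 : ∀ i k, 0 ≤ M i k) (hM1 : ∀ i, ∑ k, M i k = 1)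
    (F : K → X → ℝ) (hF : ∀ k x, F k x = M (c x) k)
    (ρ : Matrix (K × K) (K × K) ℝ)
    (hρ : ∀ kk ll : K × K, ρ kk ll = ∑ x, μ x *
      (Real.sqrt (F kk.1 x * F ll.1 x) *
        Θ (fun y => Real.sqrt (F kk.2 y * F ll.2 y)) x))
    (hherm : ρ.IsHermitian) :
    ρ = ∑ ii : I × I,
        (∑ x, μ x * ((if c x = ii.1 then (1:ℝ) else 0) *
            Θ (fun y => if c y = ii.2 then (1:ℝ) else 0) x)) •
          Matrix.vecMulVec
            (fun kk : K × K => Real.sqrt (M ii.1 kk.1 * M ii.2 kk.2))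
            (fun kk : K × K => Real.sqrt (M ii.1 kk.1 * M ii.2 kk.2)) ∧
    vonNeumannR hherm ≤
      shannon (fun ii : I × I => ∑ x, μ x *
        ((if c x = ii.1 then (1:ℝ) else 0) *
          Θ (fun y => if c y = ii.2 then (1:ℝ) else 0) x)) := by
  classical
  set v : I × I → (K × K) → ℝ :=
    fun ii kk => Real.sqrt (M ii.1 kk.1 * M ii.2 kk.2) with hvdef
  set w : I × I → ℝ := fun ii => ∑ x, μ x * ((if c x = ii.1 then (1:ℝ) else 0) *
      Θ (fun y => if c y = ii.2 then (1:ℝ) else 0) x) with hwdef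
  have hsplit : ∀ (i i' : I) (k k' : K),
      Real.sqrt (M i k * M i' k') = Real.sqrt (M i k) * Real.sqrt (M i' k') :=
    fun i i' k k' => Real.sqrt_mul (hM0 i k) _
  -- weights as double sums
  have hwexpr : ∀ ii : I × I, w ii = ∑ x, ∑ y, (μ x * P x y) *
      ((if c x = ii.1 then (1:ℝ) else 0) * (if c y = ii.2 then (1:ℝ) else 0)) := by
    intro ii
    rw [hwdef]
    simp only [hΘ, Finset.mul_sum]
    exact Finset.sum_congr rfl fun x _ => Finset.sum_congr rfl fun y _ => by ring
  have hw0 : ∀ ii : I × I, 0 ≤ w ii := by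
    intro ii
    rw [hwexpr ii]
    refine Finset.sum_nonneg fun x _ => Finset.sum_nonneg fun y _ => ?_
    refine mul_nonneg (mul_nonneg (hμ0 x) (hP0 x y)) (mul_nonneg ?_ ?_) <;> positivity
  have hv1 : ∀ ii : I × I, ∑ kk : K × K, (v ii kk)^2 = 1 := by
    intro ii
    have : ∀ kk : K × K, (v ii kk)^2 = M ii.1 kk.1 * M ii.2 kk.2 := by
      intro kk
      exact Real.sq_sqrt (mul_nonneg (hM0 _ _) (hM0 _ _))
    simp_rw [this]
    rw [Fintype.sum_prod_type, ← Finset.sum_mul_sum, hM1, hM1, one_mul]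
  -- collapse lemma
  have hcollapse : ∀ (x y : X) (G : I × I → ℝ),
      (∑ ii : I × I, ((if c x = ii.1 then (1:ℝ) else 0) *
        (if c y = ii.2 then (1:ℝ) else 0)) * G ii) = G (c x, c y) := by
    intro x y G
    rw [Fintype.sum_prod_type]
    have key : ∀ i0 i1, ((if c x = i0 then (1:ℝ) else 0) *
        (if c y = i1 then (1:ℝ) else 0)) * G (i0, i1)
        = if c x = i0 then (if c y = i1 then G (i0, i1) else 0) else 0 := by
      intro i0 i1
      by_cases h0 : c x = i0 <;> by_cases h1 : c y = i1 <;> simp [h0, h1]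
    simp_rw [key]
    simp [Finset.sum_ite_eq]
  -- entrywise decomposition
  have hρ' : ∀ kk ll : K × K, ρ kk ll = ∑ ii : I × I, w ii * (v ii kk * v ii ll) := by
    intro kk ll
    have lhs : ρ kk ll = ∑ x, ∑ y, (μ x * P x y) *
        (Real.sqrt (M (c x) kk.1) * Real.sqrt (M (c x) ll.1) *
          (Real.sqrt (M (c y) kk.2) * Real.sqrt (M (c y) ll.2))) := by
      rw [hρ]
      simp only [hΘ, hF, hsplit, Finset.mul_sum]
      exact Finset.sum_congr rfl fun x _ => Finset.sum_congr rfl fun y _ => by ring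
    rw [lhs]
    have rhs : ∑ ii : I × I, w ii * (v ii kk * v ii ll)
        = ∑ x, ∑ y, (μ x * P x y) * (v (c x, c y) kk * v (c x, c y) ll) := by
      calc ∑ ii : I × I, w ii * (v ii kk * v ii ll)
          = ∑ ii : I × I, ∑ x, ∑ y, ((μ x * P x y) *
              ((if c x = ii.1 then (1:ℝ) else 0) * (if c y = ii.2 then (1:ℝ) else 0))) *
              (v ii kk * v ii ll) := by
            refine Finset.sum_congr rfl fun ii _ => ?_
            rw [hwexpr ii, Finset.sum_mul]
            exact Finset.sum_congr rfl fun x _ => by rw [Finset.sum_mul]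
        _ = ∑ x, ∑ y, ∑ ii : I × I, ((μ x * P x y) *
              ((if c x = ii.1 then (1:ℝ) else 0) * (if c y = ii.2 then (1:ℝ) else 0))) *
              (v ii kk * v ii ll) := by
            rw [Finset.sum_comm]
            exact Finset.sum_congr rfl fun x _ => Finset.sum_comm
        _ = ∑ x, ∑ y, (μ x * P x y) * (v (c x, c y) kk * v (c x, c y) ll) := by
            refine Finset.sum_congr rfl fun x _ => Finset.sum_congr rfl fun y _ => ?_
            rw [← hcollapse x y (fun ii => v ii kk * v ii ll), Finset.mul_sum]
            exact Finset.sum_congr rfl fun ii _ => by ring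
    rw [rhs]
    refine Finset.sum_congr rfl fun x _ => Finset.sum_congr rfl fun y _ => ?_
    simp only [hvdef, hsplit]
    ring
  constructor
  · ext kk ll
    rw [hρ' kk ll]
    simp only [Matrix.sum_apply, Matrix.smul_apply, Matrix.vecMulVec_apply, smul_eq_mul]
    rfl
  · exact main_aux w hw0 v hv1 ρ hρ' hherm
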